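/- Every A ∈ GL(4,ℂ) satisfying F∘A = c·F for some nonzero c ∈ ℂ factors uniquely as A = Δ·P_σ, where Δ is an invertible diagonal matrix with Δ₀₀Δ₁₁Δ₂₂ = Δ₃₃³, σ is a permutation of {0,1,2}, and P_σ is the 4×4 permutation matrix acting by σ on the first three coordinates and fixing the last coordinate. Moreover each P_σ itself satisfies F∘P_σ = F. (This realizes the semidirect product decomposition GL(S_{3A₂}) ≅ D ⋊ S₃, where D is the group of diagonal matrices diag(λ₀,λ₁,λ₂,λ₃) with λ₀λ₁λ₂ = λ₃³ and S₃ permutes the first three coordinates.) -/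

import Mathlib

open MvPolynomial
open Matrix

/-- The defining cubic form of the 3A₂ cubic surface: F = x₀x₁x₂ + x₃³. -/
noncomputable def F3A2 : MvPolynomial (Fin 4) ℂ :=
  X 0 * X 1 * X 2 + X 3 ^ 3

/-- The substitution action: (P∘A)(x) = P(A·x), i.e. xⱼ ↦ Σₖ Aⱼₖ·xₖ. -/
noncomputable def actM (A : Matrix (Fin 4) (Fin 4) ℂ) (P : MvPolynomial (Fin 4) ℂ) :
    MvPolynomial (Fin 4) ℂ :=
  MvPolynomial.aeval (fun j => ∑ k : Fin 4, MvPolynomial.C (A j k) * MvPolynomial.X k) P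

/-- The extension of a permutation σ of {0,1,2} to {0,1,2,3} fixing 3. -/
def extFun (σ : Equiv.Perm (Fin 3)) : Fin 4 → Fin 4 :=
  fun i => if h : (i : ℕ) < 3 then Fin.castSucc (σ ⟨i, h⟩) else i

/-- The 4×4 permutation matrix acting by σ on the first three coordinates and fixing
the last coordinate: its j-th column is the standard basis vector e_{σ(j)} (j < 3),
and its last column is e₃. -/
def permMat (σ : Equiv.Perm (Fin 3)) : Matrix (Fin 4) (Fin 4) ℂ :=
  Matrix.of fun i j => if i = extFun σ j then 1 else 0

/- ### Auxiliary lemmas -/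

theorem permMat_apply' (σ : Equiv.Perm (Fin 3)) (i j : Fin 4) :
    permMat σ i j = if i = extFun σ j then 1 else 0 := rfl

theorem perm_list' : ∀ σ : Equiv.Perm (Fin 3), σ = 1 ∨ σ = Equiv.swap 0 1 ∨ σ = Equiv.swap 0 2
    ∨ σ = Equiv.swap 1 2 ∨ σ = Equiv.swap 0 1 * Equiv.swap 0 2
    ∨ σ = Equiv.swap 0 2 * Equiv.swap 0 1 := by decide

theorem eval_actM' (A : Matrix (Fin 4) (Fin 4) ℂ) (P : MvPolynomial (Fin 4) ℂ) (x : Fin 4 → ℂ) :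
    eval x (actM A P) = eval (A.mulVec x) P := by
  rw [actM, aeval_eq_bind₁, eval, eval₂Hom_bind₁]
  have : (eval₂Hom (RingHom.id ℂ) fun i =>
      (eval₂Hom (RingHom.id ℂ) x) (∑ k : Fin 4, C (A i k) * X k)) = eval (A.mulVec x) := by
    apply MvPolynomial.ringHom_ext <;>
      simp [Matrix.mulVec, dotProduct]
  rw [this]

theorem extFun_castSucc' (σ : Equiv.Perm (Fin 3)) (j : Fin 3) :
    extFun σ (Fin.castSucc j) = Fin.castSucc (σ j) := by
  have h : ((Fin.castSucc j : Fin 4) : ℕ) < 3 := j.isLt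
  have h2 : (⟨((Fin.castSucc j : Fin 4) : ℕ), h⟩ : Fin 3) = j := Fin.ext rfl
  rw [extFun]
  rw [dif_pos h, h2]

theorem extFun_three' (σ : Equiv.Perm (Fin 3)) : extFun σ 3 = 3 := by
  rw [extFun, dif_neg]
  exact by decide

theorem extFun_inv_right' (σ : Equiv.Perm (Fin 3)) (i : Fin 4) :
    extFun σ (extFun σ⁻¹ i) = i := by
  induction i using Fin.lastCases with
  | last =>
      have h3 : (Fin.last 3 : Fin 4) = 3 := rfl
      rw [h3, extFun_three', extFun_three']
  | cast j =>
      rw [extFun_castSucc', extFun_castSucc', ← Equiv.Perm.mul_apply, mul_inv_cancel, Equiv.Perm.one_apply]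

theorem diag_perm_entry (d : Fin 4 → ℂ) (σ : Equiv.Perm (Fin 3)) (i j : Fin 4) :
    (Matrix.diagonal d * permMat σ) i j = if i = extFun σ j then d i else 0 := by
  rw [Matrix.diagonal_mul, permMat_apply']
  by_cases h : i = extFun σ j <;> simp [h]

theorem uniq_aux (d d' : Fin 4 → ℂ) (σ σ' : Equiv.Perm (Fin 3))
    (hd : ∀ i, d i ≠ 0)
    (h : Matrix.diagonal d * permMat σ = Matrix.diagonal d' * permMat σ') :
    d = d' ∧ σ = σ' := by
  have hσ : σ = σ' := by
    apply Equiv.ext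
    intro j
    have he := congrFun (congrFun h (extFun σ (Fin.castSucc j))) (Fin.castSucc j)
    rw [diag_perm_entry, diag_perm_entry, if_pos rfl] at he
    by_cases hcase : extFun σ (Fin.castSucc j) = extFun σ' (Fin.castSucc j)
    · rw [extFun_castSucc', extFun_castSucc'] at hcase
      exact Fin.castSucc_injective _ hcase
    · rw [if_neg hcase] at he
      exact absurd he (hd _)
  subst hσ
  refine ⟨funext fun i => ?_, rfl⟩
  have he := congrFun (congrFun h i) (extFun σ⁻¹ i)
  rw [diag_perm_entry, diag_perm_entry, if_pos (extFun_inv_right' σ i).symm,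
    if_pos (extFun_inv_right' σ i).symm] at he
  exact he

set_option maxHeartbeats 4000000 in
theorem mainCase (A : Matrix (Fin 4) (Fin 4) ℂ) (c : ℂ) (hc : c ≠ 0)
    (hval : ∀ x : Fin 4 → ℂ, (A *ᵥ x) 0 * (A *ᵥ x) 1 * (A *ᵥ x) 2 + (A *ᵥ x) 3 ^ 3
        = c * (x 0 * x 1 * x 2 + x 3 ^ 3))
    (hAe : ∀ (jj : Fin 4), A *ᵥ (fun m => if m = jj then (1:ℂ) else 0) = fun m => A m jj)
    (grad : ∀ u z : Fin 4 → ℂ,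
        (A *ᵥ z) 0 * (A *ᵥ u) 1 * (A *ᵥ u) 2 + (A *ᵥ u) 0 * (A *ᵥ z) 1 * (A *ᵥ u) 2
          + (A *ᵥ u) 0 * (A *ᵥ u) 1 * (A *ᵥ z) 2 + 3 * (A *ᵥ u) 3 ^ 2 * (A *ᵥ z) 3
        = c * (z 0 * u 1 * u 2 + u 0 * z 1 * u 2 + u 0 * u 1 * z 2 + 3 * u 3 ^ 2 * z 3))
    (σ : Equiv.Perm (Fin 3))
    (hcol : ∀ j : Fin 3, A (Fin.castSucc (σ j)) (Fin.castSucc j) ≠ 0 ∧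
        ∀ r : Fin 4, r ≠ Fin.castSucc (σ j) → A r (Fin.castSucc j) = 0) :
    ∃ d : Fin 4 → ℂ, (∀ i, d i ≠ 0) ∧ d 0 * d 1 * d 2 = d 3 ^ 3 ∧
      A = Matrix.diagonal d * permMat σ := by
  rcases perm_list' σ with rfl | rfl | rfl | rfl | rfl | rfl
  · -- case σ = 1
    have n0 : A 0 0 ≠ 0 := (hcol 0).1
    have n1 : A 1 1 ≠ 0 := (hcol 1).1
    have n2 : A 2 2 ≠ 0 := (hcol 2).1
    have z10 : A 1 0 = 0 := (hcol 0).2 1 (by decide)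
    have z20 : A 2 0 = 0 := (hcol 0).2 2 (by decide)
    have z30 : A 3 0 = 0 := (hcol 0).2 3 (by decide)
    have z01 : A 0 1 = 0 := (hcol 1).2 0 (by decide)
    have z21 : A 2 1 = 0 := (hcol 1).2 2 (by decide)
    have z31 : A 3 1 = 0 := (hcol 1).2 3 (by decide)
    have z02 : A 0 2 = 0 := (hcol 2).2 0 (by decide)
    have z12 : A 1 2 = 0 := (hcol 2).2 1 (by decide)
    have z32 : A 3 2 = 0 := (hcol 2).2 3 (by decide)
    have k0 : A 0 3 = 0 := by
      have h := grad ![0,1,1,0] (fun m => if m = 3 then 1 else 0)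
      rw [hAe] at h
      simp [Matrix.mulVec, dotProduct, Fin.sum_univ_four,
        z10, z20, z30, z01, z21, z31, z02, z12, z32, mul_eq_zero, n0, n1, n2] at h
      tauto
    have k1 : A 1 3 = 0 := by
      have h := grad ![1,0,1,0] (fun m => if m = 3 then 1 else 0)
      rw [hAe] at h
      simp [Matrix.mulVec, dotProduct, Fin.sum_univ_four,
        z10, z20, z30, z01, z21, z31, z02, z12, z32, mul_eq_zero, n0, n1, n2] at h
      tauto
    have k2 : A 2 3 = 0 := by
      have h := grad ![1,1,0,0] (fun m => if m = 3 then 1 else 0)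
      rw [hAe] at h
      simp [Matrix.mulVec, dotProduct, Fin.sum_univ_four,
        z10, z20, z30, z01, z21, z31, z02, z12, z32, mul_eq_zero, n0, n1, n2] at h
      tauto
    have hd3 : A 3 3 ^ 3 = c := by
      have h := hval (fun m => if m = 3 then 1 else 0)
      rw [hAe] at h
      simpa [k0, k1, k2] using h
    have n3 : A 3 3 ≠ 0 := by
      intro h0; rw [h0] at hd3; simp at hd3; exact hc hd3.symm
    have hp : A 0 0 * A 1 1 * A 2 2 = c := by
      have h := hval ![1,1,1,0]
      simpa [Matrix.mulVec, dotProduct, Fin.sum_univ_four,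
        z10, z20, z30, z01, z21, z31, z02, z12, z32] using h
    refine ⟨![A 0 0, A 1 1, A 2 2, A 3 3], ?_, ?_, ?_⟩
    · intro i; fin_cases i
      · simpa using n0
      · simpa using n1
      · simpa using n2
      · simpa using n3
    · show A 0 0 * A 1 1 * A 2 2 = A 3 3 ^ 3
      rw [hp, hd3]
    · ext i j
      fin_cases i <;> fin_cases j <;>
        simp (config := { decide := true }) [Matrix.diagonal_mul, permMat, extFun,
          z10, z20, z30, z01, z21, z31, z02, z12, z32, k0, k1, k2]
  · -- case σ = Equiv.swap 0 1
    have n0 : A 1 0 ≠ 0 := (hcol 0).1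
    have n1 : A 0 1 ≠ 0 := (hcol 1).1
    have n2 : A 2 2 ≠ 0 := (hcol 2).1
    have z00 : A 0 0 = 0 := (hcol 0).2 0 (by decide)
    have z20 : A 2 0 = 0 := (hcol 0).2 2 (by decide)
    have z30 : A 3 0 = 0 := (hcol 0).2 3 (by decide)
    have z11 : A 1 1 = 0 := (hcol 1).2 1 (by decide)
    have z21 : A 2 1 = 0 := (hcol 1).2 2 (by decide)
    have z31 : A 3 1 = 0 := (hcol 1).2 3 (by decide)
    have z02 : A 0 2 = 0 := (hcol 2).2 0 (by decide)
    have z12 : A 1 2 = 0 := (hcol 2).2 1 (by decide)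
    have z32 : A 3 2 = 0 := (hcol 2).2 3 (by decide)
    have k0 : A 0 3 = 0 := by
      have h := grad ![1,0,1,0] (fun m => if m = 3 then 1 else 0)
      rw [hAe] at h
      simp [Matrix.mulVec, dotProduct, Fin.sum_univ_four,
        z00, z20, z30, z11, z21, z31, z02, z12, z32, mul_eq_zero, n0, n1, n2] at h
      tauto
    have k1 : A 1 3 = 0 := by
      have h := grad ![0,1,1,0] (fun m => if m = 3 then 1 else 0)
      rw [hAe] at h
      simp [Matrix.mulVec, dotProduct, Fin.sum_univ_four,
        z00, z20, z30, z11, z21, z31, z02, z12, z32, mul_eq_zero, n0, n1, n2] at h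
      tauto
    have k2 : A 2 3 = 0 := by
      have h := grad ![1,1,0,0] (fun m => if m = 3 then 1 else 0)
      rw [hAe] at h
      simp [Matrix.mulVec, dotProduct, Fin.sum_univ_four,
        z00, z20, z30, z11, z21, z31, z02, z12, z32, mul_eq_zero, n0, n1, n2] at h
      tauto
    have hd3 : A 3 3 ^ 3 = c := by
      have h := hval (fun m => if m = 3 then 1 else 0)
      rw [hAe] at h
      simpa [k0, k1, k2] using h
    have n3 : A 3 3 ≠ 0 := by
      intro h0; rw [h0] at hd3; simp at hd3; exact hc hd3.symm
    have hp : A 0 1 * A 1 0 * A 2 2 = c := by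
      have h := hval ![1,1,1,0]
      simpa [Matrix.mulVec, dotProduct, Fin.sum_univ_four,
        z00, z20, z30, z11, z21, z31, z02, z12, z32] using h
    refine ⟨![A 0 1, A 1 0, A 2 2, A 3 3], ?_, ?_, ?_⟩
    · intro i; fin_cases i
      · simpa using n1
      · simpa using n0
      · simpa using n2
      · simpa using n3
    · show A 0 1 * A 1 0 * A 2 2 = A 3 3 ^ 3
      rw [hp, hd3]
    · ext i j
      fin_cases i <;> fin_cases j <;>
        simp (config := { decide := true }) [Matrix.diagonal_mul, permMat, extFun,
          z00, z20, z30, z11, z21, z31, z02, z12, z32, k0, k1, k2]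
  · -- case σ = Equiv.swap 0 2
    have n0 : A 2 0 ≠ 0 := (hcol 0).1
    have n1 : A 1 1 ≠ 0 := (hcol 1).1
    have n2 : A 0 2 ≠ 0 := (hcol 2).1
    have z00 : A 0 0 = 0 := (hcol 0).2 0 (by decide)
    have z10 : A 1 0 = 0 := (hcol 0).2 1 (by decide)
    have z30 : A 3 0 = 0 := (hcol 0).2 3 (by decide)
    have z01 : A 0 1 = 0 := (hcol 1).2 0 (by decide)
    have z21 : A 2 1 = 0 := (hcol 1).2 2 (by decide)
    have z31 : A 3 1 = 0 := (hcol 1).2 3 (by decide)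
    have z12 : A 1 2 = 0 := (hcol 2).2 1 (by decide)
    have z22 : A 2 2 = 0 := (hcol 2).2 2 (by decide)
    have z32 : A 3 2 = 0 := (hcol 2).2 3 (by decide)
    have k0 : A 0 3 = 0 := by
      have h := grad ![1,1,0,0] (fun m => if m = 3 then 1 else 0)
      rw [hAe] at h
      simp [Matrix.mulVec, dotProduct, Fin.sum_univ_four,
        z00, z10, z30, z01, z21, z31, z12, z22, z32, mul_eq_zero, n0, n1, n2] at h
      tauto
    have k1 : A 1 3 = 0 := by
      have h := grad ![1,0,1,0] (fun m => if m = 3 then 1 else 0)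
      rw [hAe] at h
      simp [Matrix.mulVec, dotProduct, Fin.sum_univ_four,
        z00, z10, z30, z01, z21, z31, z12, z22, z32, mul_eq_zero, n0, n1, n2] at h
      tauto
    have k2 : A 2 3 = 0 := by
      have h := grad ![0,1,1,0] (fun m => if m = 3 then 1 else 0)
      rw [hAe] at h
      simp [Matrix.mulVec, dotProduct, Fin.sum_univ_four,
        z00, z10, z30, z01, z21, z31, z12, z22, z32, mul_eq_zero, n0, n1, n2] at h
      tauto
    have hd3 : A 3 3 ^ 3 = c := by
      have h := hval (fun m => if m = 3 then 1 else 0)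
      rw [hAe] at h
      simpa [k0, k1, k2] using h
    have n3 : A 3 3 ≠ 0 := by
      intro h0; rw [h0] at hd3; simp at hd3; exact hc hd3.symm
    have hp : A 0 2 * A 1 1 * A 2 0 = c := by
      have h := hval ![1,1,1,0]
      simpa [Matrix.mulVec, dotProduct, Fin.sum_univ_four,
        z00, z10, z30, z01, z21, z31, z12, z22, z32] using h
    refine ⟨![A 0 2, A 1 1, A 2 0, A 3 3], ?_, ?_, ?_⟩
    · intro i; fin_cases i
      · simpa using n2
      · simpa using n1
      · simpa using n0
      · simpa using n3
    · show A 0 2 * A 1 1 * A 2 0 = A 3 3 ^ 3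
      rw [hp, hd3]
    · ext i j
      fin_cases i <;> fin_cases j <;>
        simp (config := { decide := true }) [Matrix.diagonal_mul, permMat, extFun,
          z00, z10, z30, z01, z21, z31, z12, z22, z32, k0, k1, k2]
  · -- case σ = Equiv.swap 1 2
    have n0 : A 0 0 ≠ 0 := (hcol 0).1
    have n1 : A 2 1 ≠ 0 := (hcol 1).1
    have n2 : A 1 2 ≠ 0 := (hcol 2).1
    have z10 : A 1 0 = 0 := (hcol 0).2 1 (by decide)
    have z20 : A 2 0 = 0 := (hcol 0).2 2 (by decide)
    have z30 : A 3 0 = 0 := (hcol 0).2 3 (by decide)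
    have z01 : A 0 1 = 0 := (hcol 1).2 0 (by decide)
    have z11 : A 1 1 = 0 := (hcol 1).2 1 (by decide)
    have z31 : A 3 1 = 0 := (hcol 1).2 3 (by decide)
    have z02 : A 0 2 = 0 := (hcol 2).2 0 (by decide)
    have z22 : A 2 2 = 0 := (hcol 2).2 2 (by decide)
    have z32 : A 3 2 = 0 := (hcol 2).2 3 (by decide)
    have k0 : A 0 3 = 0 := by
      have h := grad ![0,1,1,0] (fun m => if m = 3 then 1 else 0)
      rw [hAe] at h
      simp [Matrix.mulVec, dotProduct, Fin.sum_univ_four,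
        z10, z20, z30, z01, z11, z31, z02, z22, z32, mul_eq_zero, n0, n1, n2] at h
      tauto
    have k1 : A 1 3 = 0 := by
      have h := grad ![1,1,0,0] (fun m => if m = 3 then 1 else 0)
      rw [hAe] at h
      simp [Matrix.mulVec, dotProduct, Fin.sum_univ_four,
        z10, z20, z30, z01, z11, z31, z02, z22, z32, mul_eq_zero, n0, n1, n2] at h
      tauto
    have k2 : A 2 3 = 0 := by
      have h := grad ![1,0,1,0] (fun m => if m = 3 then 1 else 0)
      rw [hAe] at h
      simp [Matrix.mulVec, dotProduct, Fin.sum_univ_four,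
        z10, z20, z30, z01, z11, z31, z02, z22, z32, mul_eq_zero, n0, n1, n2] at h
      tauto
    have hd3 : A 3 3 ^ 3 = c := by
      have h := hval (fun m => if m = 3 then 1 else 0)
      rw [hAe] at h
      simpa [k0, k1, k2] using h
    have n3 : A 3 3 ≠ 0 := by
      intro h0; rw [h0] at hd3; simp at hd3; exact hc hd3.symm
    have hp : A 0 0 * A 1 2 * A 2 1 = c := by
      have h := hval ![1,1,1,0]
      simpa [Matrix.mulVec, dotProduct, Fin.sum_univ_four,
        z10, z20, z30, z01, z11, z31, z02, z22, z32] using h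
    refine ⟨![A 0 0, A 1 2, A 2 1, A 3 3], ?_, ?_, ?_⟩
    · intro i; fin_cases i
      · simpa using n0
      · simpa using n2
      · simpa using n1
      · simpa using n3
    · show A 0 0 * A 1 2 * A 2 1 = A 3 3 ^ 3
      rw [hp, hd3]
    · ext i j
      fin_cases i <;> fin_cases j <;>
        simp (config := { decide := true }) [Matrix.diagonal_mul, permMat, extFun,
          z10, z20, z30, z01, z11, z31, z02, z22, z32, k0, k1, k2]
  · -- case σ = Equiv.swap 0 1 * Equiv.swap 0 2
    have n0 : A 2 0 ≠ 0 := (hcol 0).1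
    have n1 : A 0 1 ≠ 0 := (hcol 1).1
    have n2 : A 1 2 ≠ 0 := (hcol 2).1
    have z00 : A 0 0 = 0 := (hcol 0).2 0 (by decide)
    have z10 : A 1 0 = 0 := (hcol 0).2 1 (by decide)
    have z30 : A 3 0 = 0 := (hcol 0).2 3 (by decide)
    have z11 : A 1 1 = 0 := (hcol 1).2 1 (by decide)
    have z21 : A 2 1 = 0 := (hcol 1).2 2 (by decide)
    have z31 : A 3 1 = 0 := (hcol 1).2 3 (by decide)
    have z02 : A 0 2 = 0 := (hcol 2).2 0 (by decide)
    have z22 : A 2 2 = 0 := (hcol 2).2 2 (by decide)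
    have z32 : A 3 2 = 0 := (hcol 2).2 3 (by decide)
    have k0 : A 0 3 = 0 := by
      have h := grad ![1,0,1,0] (fun m => if m = 3 then 1 else 0)
      rw [hAe] at h
      simp [Matrix.mulVec, dotProduct, Fin.sum_univ_four,
        z00, z10, z30, z11, z21, z31, z02, z22, z32, mul_eq_zero, n0, n1, n2] at h
      tauto
    have k1 : A 1 3 = 0 := by
      have h := grad ![1,1,0,0] (fun m => if m = 3 then 1 else 0)
      rw [hAe] at h
      simp [Matrix.mulVec, dotProduct, Fin.sum_univ_four,
        z00, z10, z30, z11, z21, z31, z02, z22, z32, mul_eq_zero, n0, n1, n2] at h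
      tauto
    have k2 : A 2 3 = 0 := by
      have h := grad ![0,1,1,0] (fun m => if m = 3 then 1 else 0)
      rw [hAe] at h
      simp [Matrix.mulVec, dotProduct, Fin.sum_univ_four,
        z00, z10, z30, z11, z21, z31, z02, z22, z32, mul_eq_zero, n0, n1, n2] at h
      tauto
    have hd3 : A 3 3 ^ 3 = c := by
      have h := hval (fun m => if m = 3 then 1 else 0)
      rw [hAe] at h
      simpa [k0, k1, k2] using h
    have n3 : A 3 3 ≠ 0 := by
      intro h0; rw [h0] at hd3; simp at hd3; exact hc hd3.symm
    have hp : A 0 1 * A 1 2 * A 2 0 = c := by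
      have h := hval ![1,1,1,0]
      simpa [Matrix.mulVec, dotProduct, Fin.sum_univ_four,
        z00, z10, z30, z11, z21, z31, z02, z22, z32] using h
    refine ⟨![A 0 1, A 1 2, A 2 0, A 3 3], ?_, ?_, ?_⟩
    · intro i; fin_cases i
      · simpa using n1
      · simpa using n2
      · simpa using n0
      · simpa using n3
    · show A 0 1 * A 1 2 * A 2 0 = A 3 3 ^ 3
      rw [hp, hd3]
    · ext i j
      fin_cases i <;> fin_cases j <;>
        simp (config := { decide := true }) [Matrix.diagonal_mul, permMat, extFun,
          z00, z10, z30, z11, z21, z31, z02, z22, z32, k0, k1, k2]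
  · -- case σ = Equiv.swap 0 2 * Equiv.swap 0 1
    have n0 : A 1 0 ≠ 0 := (hcol 0).1
    have n1 : A 2 1 ≠ 0 := (hcol 1).1
    have n2 : A 0 2 ≠ 0 := (hcol 2).1
    have z00 : A 0 0 = 0 := (hcol 0).2 0 (by decide)
    have z20 : A 2 0 = 0 := (hcol 0).2 2 (by decide)
    have z30 : A 3 0 = 0 := (hcol 0).2 3 (by decide)
    have z01 : A 0 1 = 0 := (hcol 1).2 0 (by decide)
    have z11 : A 1 1 = 0 := (hcol 1).2 1 (by decide)
    have z31 : A 3 1 = 0 := (hcol 1).2 3 (by decide)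
    have z12 : A 1 2 = 0 := (hcol 2).2 1 (by decide)
    have z22 : A 2 2 = 0 := (hcol 2).2 2 (by decide)
    have z32 : A 3 2 = 0 := (hcol 2).2 3 (by decide)
    have k0 : A 0 3 = 0 := by
      have h := grad ![1,1,0,0] (fun m => if m = 3 then 1 else 0)
      rw [hAe] at h
      simp [Matrix.mulVec, dotProduct, Fin.sum_univ_four,
        z00, z20, z30, z01, z11, z31, z12, z22, z32, mul_eq_zero, n0, n1, n2] at h
      tauto
    have k1 : A 1 3 = 0 := by
      have h := grad ![0,1,1,0] (fun m => if m = 3 then 1 else 0)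
      rw [hAe] at h
      simp [Matrix.mulVec, dotProduct, Fin.sum_univ_four,
        z00, z20, z30, z01, z11, z31, z12, z22, z32, mul_eq_zero, n0, n1, n2] at h
      tauto
    have k2 : A 2 3 = 0 := by
      have h := grad ![1,0,1,0] (fun m => if m = 3 then 1 else 0)
      rw [hAe] at h
      simp [Matrix.mulVec, dotProduct, Fin.sum_univ_four,
        z00, z20, z30, z01, z11, z31, z12, z22, z32, mul_eq_zero, n0, n1, n2] at h
      tauto
    have hd3 : A 3 3 ^ 3 = c := by
      have h := hval (fun m => if m = 3 then 1 else 0)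
      rw [hAe] at h
      simpa [k0, k1, k2] using h
    have n3 : A 3 3 ≠ 0 := by
      intro h0; rw [h0] at hd3; simp at hd3; exact hc hd3.symm
    have hp : A 0 2 * A 1 0 * A 2 1 = c := by
      have h := hval ![1,1,1,0]
      simpa [Matrix.mulVec, dotProduct, Fin.sum_univ_four,
        z00, z20, z30, z01, z11, z31, z12, z22, z32] using h
    refine ⟨![A 0 2, A 1 0, A 2 1, A 3 3], ?_, ?_, ?_⟩
    · intro i; fin_cases i
      · simpa using n2
      · simpa using n0
      · simpa using n1
      · simpa using n3
    · show A 0 2 * A 1 0 * A 2 1 = A 3 3 ^ 3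
      rw [hp, hd3]
    · ext i j
      fin_cases i <;> fin_cases j <;>
        simp (config := { decide := true }) [Matrix.diagonal_mul, permMat, extFun,
          z00, z20, z30, z01, z11, z31, z12, z22, z32, k0, k1, k2]


set_option maxHeartbeats 4000000

/-- Every A ∈ GL(4,ℂ) with F∘A = c·F (c ≠ 0) factors uniquely as A = Δ·P_σ with Δ an
invertible diagonal matrix satisfying Δ₀₀Δ₁₁Δ₂₂ = Δ₃₃³ and P_σ a permutation matrix
permuting the first three coordinates; moreover F∘P_σ = F for every σ.
This realizes GL(S_{3A₂}) ≅ D ⋊ S₃. -/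
theorem GL_stabilizer_semidirect_decomposition :
    (∀ σ : Equiv.Perm (Fin 3), actM (permMat σ) F3A2 = F3A2) ∧
    (∀ A : Matrix (Fin 4) (Fin 4) ℂ, IsUnit A.det →
      (∃ c : ℂ, c ≠ 0 ∧ actM A F3A2 = c • F3A2) →
      ∃! p : (Fin 4 → ℂ) × Equiv.Perm (Fin 3),
        (∀ i, p.1 i ≠ 0) ∧
        p.1 0 * p.1 1 * p.1 2 = p.1 3 ^ 3 ∧
        A = Matrix.diagonal p.1 * permMat p.2) := by
  constructor
  · -- permutation matrices preserve F
    intro σ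
    rcases perm_list' σ with rfl | rfl | rfl | rfl | rfl | rfl <;>
    · simp only [actM, F3A2, _root_.map_add, _root_.map_mul, _root_.map_pow, aeval_X, Fin.sum_univ_four,
        permMat_apply']
      simp (config := { decide := true }) only [reduceIte]
      norm_num
      try ring
  · rintro A hA ⟨c, hc, hFA⟩
    -- the evaluation identity
    have hval : ∀ x : Fin 4 → ℂ, (A *ᵥ x) 0 * (A *ᵥ x) 1 * (A *ᵥ x) 2 + (A *ᵥ x) 3 ^ 3
        = c * (x 0 * x 1 * x 2 + x 3 ^ 3) := by
      intro x
      have h := congrArg (eval x) hFA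
      rw [eval_actM', smul_eq_C_mul, eval_mul, eval_C] at h
      simpa [F3A2] using h
    have hinv : ∀ v : Fin 4 → ℂ, A⁻¹ *ᵥ (A *ᵥ v) = v := by
      intro v
      rw [Matrix.mulVec_mulVec, Matrix.nonsing_inv_mul A hA, Matrix.one_mulVec]
    have hinv' : ∀ v : Fin 4 → ℂ, A *ᵥ (A⁻¹ *ᵥ v) = v := by
      intro v
      rw [Matrix.mulVec_mulVec, Matrix.mul_nonsing_inv A hA, Matrix.one_mulVec]
    have hAe : ∀ (jj : Fin 4), A *ᵥ (fun m => if m = jj then (1:ℂ) else 0) = fun m => A m jj := by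
      intro jj; funext m; simp [Matrix.mulVec, dotProduct]
    -- polarized gradient identity
    have grad : ∀ u z : Fin 4 → ℂ,
        (A *ᵥ z) 0 * (A *ᵥ u) 1 * (A *ᵥ u) 2 + (A *ᵥ u) 0 * (A *ᵥ z) 1 * (A *ᵥ u) 2
          + (A *ᵥ u) 0 * (A *ᵥ u) 1 * (A *ᵥ z) 2 + 3 * (A *ᵥ u) 3 ^ 2 * (A *ᵥ z) 3
        = c * (z 0 * u 1 * u 2 + u 0 * z 1 * u 2 + u 0 * u 1 * z 2 + 3 * u 3 ^ 2 * z 3) := by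
      intro u z
      have h : ∀ t : ℂ, _ := fun t : ℂ => hval (u + t • z)
      simp only [Matrix.mulVec_add, Matrix.mulVec_smul, Pi.add_apply, Pi.smul_apply,
        smul_eq_mul] at h
      linear_combination (8 * (h 1 - h (-1)) - (h 2 - h (-2))) / 12
    -- column structure
    have colfact : ∀ j : Fin 3, ∃ k : Fin 3,
        A (Fin.castSucc k) (Fin.castSucc j) ≠ 0 ∧
        ∀ r : Fin 4, r ≠ Fin.castSucc k → A r (Fin.castSucc j) = 0 := by
      intro j
      have hRHS : ∀ z : Fin 4 → ℂ,
          c * (z 0 * (fun m => if m = Fin.castSucc j then (1:ℂ) else 0) 1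
                * (fun m => if m = Fin.castSucc j then (1:ℂ) else 0) 2
            + (fun m => if m = Fin.castSucc j then (1:ℂ) else 0) 0 * z 1
                * (fun m => if m = Fin.castSucc j then (1:ℂ) else 0) 2
            + (fun m => if m = Fin.castSucc j then (1:ℂ) else 0) 0
                * (fun m => if m = Fin.castSucc j then (1:ℂ) else 0) 1 * z 2
            + 3 * (fun m => if m = Fin.castSucc j then (1:ℂ) else 0) 3 ^ 2 * z 3) = 0 := by
        intro z; fin_cases j <;> simp (config := { decide := true })
      have key : ∀ r : Fin 4,
          (fun m => if m = r then (1:ℂ) else 0) 0 * A 1 (Fin.castSucc j) * A 2 (Fin.castSucc j)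
          + A 0 (Fin.castSucc j) * (fun m => if m = r then (1:ℂ) else 0) 1 * A 2 (Fin.castSucc j)
          + A 0 (Fin.castSucc j) * A 1 (Fin.castSucc j) * (fun m => if m = r then (1:ℂ) else 0) 2
          + 3 * A 3 (Fin.castSucc j) ^ 2 * (fun m => if m = r then (1:ℂ) else 0) 3 = 0 := by
        intro r
        have h := grad (fun m => if m = Fin.castSucc j then 1 else 0)
          (A⁻¹ *ᵥ (fun m => if m = r then 1 else 0))
        rw [hinv', hAe] at h
        exact h.trans (hRHS _)
      have h12 : A 1 (Fin.castSucc j) * A 2 (Fin.castSucc j) = 0 := by simpa using key 0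
      have h02 : A 0 (Fin.castSucc j) * A 2 (Fin.castSucc j) = 0 := by simpa using key 1
      have h01 : A 0 (Fin.castSucc j) * A 1 (Fin.castSucc j) = 0 := by simpa using key 2
      have h3 : A 3 (Fin.castSucc j) = 0 := by
        have h := key 3
        simp at h
        exact h
      have hne : ¬(A 0 (Fin.castSucc j) = 0 ∧ A 1 (Fin.castSucc j) = 0
          ∧ A 2 (Fin.castSucc j) = 0) := by
        rintro ⟨e0, e1, e2⟩
        have hcol0 : A *ᵥ (fun m => if m = Fin.castSucc j then (1:ℂ) else 0) = 0 := by
          rw [hAe]; funext m; fin_cases m <;> simp [e0, e1, e2, h3]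
        have h := hinv (fun m => if m = Fin.castSucc j then (1:ℂ) else 0)
        rw [hcol0] at h
        have h2 := congrFun h (Fin.castSucc j)
        simp [Matrix.mulVec_zero] at h2
      by_cases H0 : A 0 (Fin.castSucc j) = 0
      · by_cases H1 : A 1 (Fin.castSucc j) = 0
        · refine ⟨2, fun H2 => hne ⟨H0, H1, H2⟩, fun r hr => ?_⟩
          fin_cases r
          · exact H0
          · exact H1
          · exact absurd (by decide) hr
          · exact h3
        · refine ⟨1, H1, fun r hr => ?_⟩
          fin_cases r
          · exact H0
          · exact absurd (by decide) hr
          · rcases mul_eq_zero.mp h12 with h | h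
            · exact absurd h H1
            · exact h
          · exact h3
      · refine ⟨0, H0, fun r hr => ?_⟩
        fin_cases r
        · exact absurd (by decide) hr
        · rcases mul_eq_zero.mp h01 with h | h
          · exact absurd h H0
          · exact h
        · rcases mul_eq_zero.mp h02 with h | h
          · exact absurd h H0
          · exact h
        · exact h3
    -- the permutation
    have hdep : ∀ (i j k : Fin 3), i ≠ j → A (Fin.castSucc k) (Fin.castSucc i) ≠ 0 →
        (∀ r : Fin 4, r ≠ Fin.castSucc k → A r (Fin.castSucc i) = 0) →
        (∀ r : Fin 4, r ≠ Fin.castSucc k → A r (Fin.castSucc j) = 0) → False := by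
      intro i j k hij hnz hzi hzj
      have hcs : Fin.castSucc i ≠ Fin.castSucc j := fun h => hij (Fin.castSucc_injective _ h)
      set v : Fin 4 → ℂ := fun m =>
        A (Fin.castSucc k) (Fin.castSucc j) • (if m = Fin.castSucc i then (1:ℂ) else 0)
        - A (Fin.castSucc k) (Fin.castSucc i) • (if m = Fin.castSucc j then (1:ℂ) else 0) with hv
      have hAv : A *ᵥ v = 0 := by
        rw [hv]
        have h : A *ᵥ (fun m =>
            A (Fin.castSucc k) (Fin.castSucc j) • (if m = Fin.castSucc i then (1:ℂ) else 0)
            - A (Fin.castSucc k) (Fin.castSucc i) • (if m = Fin.castSucc j then (1:ℂ) else 0))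
            = A (Fin.castSucc k) (Fin.castSucc j)
                • (A *ᵥ (fun m => if m = Fin.castSucc i then (1:ℂ) else 0))
            - A (Fin.castSucc k) (Fin.castSucc i)
                • (A *ᵥ (fun m => if m = Fin.castSucc j then (1:ℂ) else 0)) := by
          rw [← Matrix.mulVec_smul, ← Matrix.mulVec_smul, ← Matrix.mulVec_sub]
          rfl
        rw [h, hAe, hAe]
        funext r
        by_cases hr : r = Fin.castSucc k
        · subst hr; simp [mul_comm]
        · simp [hzi r hr, hzj r hr]
      have hv0 : v = 0 := by
        have h := hinv v
        rw [hAv, Matrix.mulVec_zero] at h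
        exact h.symm
      have h := congrFun hv0 (Fin.castSucc j)
      rw [hv] at h
      simp [hcs.symm, Ne.symm hcs] at h
      exact hnz h
    choose τ hτ1 hτ2 using colfact
    have hinj : Function.Injective τ := by
      intro a b hab
      by_contra hne
      exact hdep a b (τ a) hne (hτ1 a) (hτ2 a) (fun r hr => hτ2 b r (hab ▸ hr))
    obtain ⟨d, hd, hprod, hA'⟩ := mainCase A c hc hval hAe grad
      (Equiv.ofBijective τ (Finite.injective_iff_bijective.mp hinj))
      (fun j => ⟨hτ1 j, hτ2 j⟩)
    refine ⟨(d, Equiv.ofBijective τ (Finite.injective_iff_bijective.mp hinj)),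
      ⟨hd, hprod, hA'⟩, ?_⟩
    rintro ⟨d', σ'⟩ ⟨hd', hprod', hA''⟩
    obtain ⟨h1, h2⟩ := uniq_aux d' d σ'
      (Equiv.ofBijective τ (Finite.injective_iff_bijective.mp hinj)) hd'
      (hA''.symm.trans hA')
    simp only [Prod.mk.injEq]
    exact ⟨h1, h2⟩
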